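/- Let F be a field with char F ≠ 2 and char F ≠ 3, let β₁ ∈ F with β₁ ≠ 0, assume the polynomial β₁ - t³ has no root in F, and let A = A₁₁(β₁) = [[0, 0, 0, 1],[β₁, 0, 0, 0]]. Then the invertible 2×2 matrices g over F with gA = A(g⊗g) are exactly the matrices [[a,0],[0,a²]] with a ∈ F and a³ = 1, and the only 2×2 matrix D with DA = A(D⊗I₂ + I₂⊗D) is the zero matrix. -/
import Mathlib


open Matrix Kronecker

/-- The matrix of structure constants (MSC) of a 2-dimensional algebra, as a
`2 × (2 × 2)` matrix: the column indexed by `(j,k)` corresponds to the product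
`e_j · e_k`, so the columns in order `(0,0), (0,1), (1,0), (1,1)` carry the
entries `α₁ α₂ α₃ α₄` (first row) and `β₁ β₂ β₃ β₄` (second row). -/
def MSC {F : Type*} [Field F] (a1 a2 a3 a4 b1 b2 b3 b4 : F) :
    Matrix (Fin 2) (Fin 2 × Fin 2) F :=
  Matrix.of fun i j => !![a1, a2, a3, a4; b1, b2, b3, b4] i (finProdFinEquiv j)

/-- `g` is an automorphism matrix of the algebra with MSC `A`:
`g` is invertible and `g • A = A • (g ⊗ g)`. -/
def IsAutoMat {F : Type*} [Field F] (A : Matrix (Fin 2) (Fin 2 × Fin 2) F)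
    (g : Matrix (Fin 2) (Fin 2) F) : Prop :=
  IsUnit g ∧ g * A = A * (g ⊗ₖ g)

/-- `D` is a derivation matrix of the algebra with MSC `A`:
`D • A = A • (D ⊗ I + I ⊗ D)`. -/
def IsDerMat {F : Type*} [Field F] (A : Matrix (Fin 2) (Fin 2 × Fin 2) F)
    (D : Matrix (Fin 2) (Fin 2) F) : Prop :=
  D * A = A * (D ⊗ₖ (1 : Matrix (Fin 2) (Fin 2) F) + (1 : Matrix (Fin 2) (Fin 2) F) ⊗ₖ D)

theorem stmt_12 {F : Type*} [Field F] (h2 : ringChar F ≠ 2) (h3 : ringChar F ≠ 3)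
    (b1 : F) (hb1 : b1 ≠ 0)
    (hroot : ∀ t : F, b1 - t ^ 3 ≠ 0)
    (A : Matrix (Fin 2) (Fin 2 × Fin 2) F)
    (hA : A = MSC 0 0 0 1 b1 0 0 0) :
    (∀ g : Matrix (Fin 2) (Fin 2) F,
      IsAutoMat A g ↔ ∃ a : F, a ^ 3 = 1 ∧ g = !![a, 0; 0, a ^ 2]) ∧
    (∀ D : Matrix (Fin 2) (Fin 2) F, IsDerMat A D ↔ D = 0) := by
  subst hA
  have h3' : (3 : F) ≠ 0 := fun h =>
    h3 (CharP.ringChar_of_prime_eq_zero Nat.prime_three (by exact_mod_cast h))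
  constructor
  · intro g
    constructor
    · rintro ⟨hu, h⟩
      have e1 := congrFun (congrFun h 0) (0,0)
      have e2 := congrFun (congrFun h 0) (0,1)
      have e3 := congrFun (congrFun h 0) (1,1)
      have e4 := congrFun (congrFun h 1) (0,0)
      have e5 := congrFun (congrFun h 1) (1,1)
      simp [MSC, Matrix.mul_apply, Fintype.sum_prod_type, Fin.sum_univ_succ,
        finProdFinEquiv] at e1 e2 e3 e4 e5
      have hdet : g 0 0 * g 1 1 - g 0 1 * g 1 0 ≠ 0 := by
        have := (Matrix.isUnit_iff_isUnit_det g).mp hu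
        rw [Matrix.det_fin_two] at this
        exact this.ne_zero
      by_cases hc : g 1 0 = 0
      · -- diagonal case
        have hbz : g 0 1 = 0 := by
          have : g 0 1 * b1 = 0 := by rw [e1, hc]; ring
          exact (mul_eq_zero.mp this).resolve_right hb1
        have ha : g 0 0 ≠ 0 := by
          intro h0; apply hdet; rw [h0, hbz]; ring
        have hd : g 1 1 = g 0 0 ^ 2 := by
          refine mul_right_cancel₀ hb1 ?_
          linear_combination e4
        refine ⟨g 0 0, ?_, ?_⟩
        · have h4 : g 0 0 * (g 0 0 ^ 3 - 1) = 0 := by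
            linear_combination -e3 - (g 1 1 + g 0 0 ^ 2) * hd
          rcases mul_eq_zero.mp h4 with h' | h'
          · exact absurd h' ha
          · linear_combination h'
        · ext i j
          fin_cases i <;> fin_cases j <;> simp [hbz, hc, hd]
      · -- antidiagonal case: contradiction
        exfalso
        have hdz : g 1 1 = 0 := e2.resolve_left hc
        have hbz : g 0 1 ≠ 0 := fun h0 => hc (by
          have : g 1 0 * g 1 0 = 0 := by rw [← e1, h0]; ring
          exact mul_self_eq_zero.mp this)
        have h1 : g 0 1 * b1 = (b1 * (g 0 1 * g 0 1)) * (b1 * (g 0 1 * g 0 1)) := by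
          rw [e1, e5]
        have hz : (g 0 1 * b1) * (b1 * g 0 1 ^ 3 - 1) = 0 := by linear_combination -h1
        have key : b1 * g 0 1 ^ 3 - 1 = 0 :=
          (mul_eq_zero.mp hz).resolve_left (mul_ne_zero hbz hb1)
        apply hroot (g 0 1)⁻¹
        field_simp
        linear_combination key
    · rintro ⟨a, ha3, rfl⟩
      have ha : a ≠ 0 := fun h => by simp [h] at ha3
      constructor
      · rw [Matrix.isUnit_iff_isUnit_det]
        have : (!![a, 0; 0, a ^ 2]).det = 1 := by
          rw [Matrix.det_fin_two]; simp; linear_combination ha3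
        rw [this]; exact isUnit_one
      · ext i j
        obtain ⟨j1, j2⟩ := j
        fin_cases i <;> fin_cases j1 <;> fin_cases j2 <;>
          simp [MSC, Matrix.mul_apply, Fintype.sum_prod_type, Fin.sum_univ_succ,
            finProdFinEquiv] <;>
          (first
            | ring1
            | linear_combination a * ha3
            | linear_combination (-a) * ha3
            | linear_combination 2 * a * ha3
            | linear_combination (-2 * a) * ha3)
  · intro D
    constructor
    · intro h
      unfold IsDerMat at h
      have e1 := congrFun (congrFun h 0) (0,0)
      have e2 := congrFun (congrFun h 0) (0,1)
      have e3 := congrFun (congrFun h 0) (1,1)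
      have e4 := congrFun (congrFun h 1) (0,0)
      simp [MSC, Matrix.mul_apply, Fintype.sum_prod_type, Fin.sum_univ_succ,
        finProdFinEquiv, Matrix.one_apply] at e1 e2 e3 e4
      have hb : D 0 1 = 0 := e1.resolve_right hb1
      have hcz : D 1 0 = 0 := e2.symm
      have h11 : D 1 1 = 2 * D 0 0 := by
        refine mul_right_cancel₀ hb1 ?_
        linear_combination e4
      have h3D : (3 : F) * D 0 0 = 0 := by linear_combination -e3 - 2 * h11
      have h00 : D 0 0 = 0 := (mul_eq_zero.mp h3D).resolve_left h3'
      have hdd : D 1 1 = 0 := by rw [h11, h00]; ring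
      ext i j
      fin_cases i <;> fin_cases j <;> simp [hb, hcz, h00, hdd]
    · rintro rfl
      unfold IsDerMat
      simp
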